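/- Let S be a unital ring and let M and N be nonzero simple S-bimodules which are not isomorphic. Then for any nonzero x ∈ M and nonzero y ∈ N there exist n ∈ ℕ and elements s_1,…,s_n, t_1,…,t_n ∈ S such that Σ_{i=1}^n s_i x t_i ≠ 0 and Σ_{i=1}^n s_i y t_i = 0. -/

import Mathlib

set_option linter.unusedSectionVars false
set_option maxHeartbeats 800000

section Aux

variable {S M N : Type*} [Ring S] [AddCommGroup M] [AddCommGroup N]
    [Module S M] [Module Sᵐᵒᵖ M] [SMulCommClass S Sᵐᵒᵖ M]
    [Module S N] [Module Sᵐᵒᵖ N] [SMulCommClass S Sᵐᵒᵖ N]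

/-- `repSum x n s t = ∑ i, s i • op (t i) • x`. -/
def repSum (x : M) (n : ℕ) (s t : Fin n → S) : M :=
  ∑ i, s i • (MulOpposite.op (t i)) • x

lemma repSum_append (x : M) {n₁ n₂ : ℕ} (s₁ t₁ : Fin n₁ → S) (s₂ t₂ : Fin n₂ → S) :
    repSum x (n₁ + n₂) (Fin.append s₁ s₂) (Fin.append t₁ t₂)
      = repSum x n₁ s₁ t₁ + repSum x n₂ s₂ t₂ := by
  simp [repSum, Fin.sum_univ_add, Fin.append_left, Fin.append_right]

lemma repSum_neg (x : M) (n : ℕ) (s t : Fin n → S) :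
    repSum x n (fun i => -(s i)) t = -(repSum x n s t) := by
  simp [repSum]

lemma repSum_smul (x : M) (n : ℕ) (s t : Fin n → S) (a : S) :
    repSum x n (fun i => a * s i) t = a • repSum x n s t := by
  simp [repSum, Finset.smul_sum, mul_smul]

lemma repSum_opsmul (x : M) (n : ℕ) (s t : Fin n → S) (a : S) :
    repSum x n s (fun i => t i * a) = (MulOpposite.op a) • repSum x n s t := by
  simp only [repSum, Finset.smul_sum]
  refine Finset.sum_congr rfl fun i _ => ?_
  rw [MulOpposite.op_mul, mul_smul, smul_comm]

lemma repSum_one (x : M) : repSum x 1 (fun _ => (1:S)) (fun _ => (1:S)) = x := by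
  simp [repSum]

end Aux

section Aux2

variable (S : Type*) {M N : Type*} [Ring S] [AddCommGroup M] [AddCommGroup N]
    [Module S M] [Module Sᵐᵒᵖ M] [SMulCommClass S Sᵐᵒᵖ M]
    [Module S N] [Module Sᵐᵒᵖ N] [SMulCommClass S Sᵐᵒᵖ N]

/-- The sub-bimodule of `M × N` generated by `(x, y)`. -/
def bimodW (x : M) (y : N) : AddSubgroup (M × N) where
  carrier := {p | ∃ (n : ℕ) (s t : Fin n → S),
      p.1 = repSum x n s t ∧ p.2 = repSum y n s t}
  zero_mem' := ⟨0, Fin.elim0, Fin.elim0, by simp [repSum], by simp [repSum]⟩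
  add_mem' := by
    rintro p q ⟨n₁, s₁, t₁, h1, h2⟩ ⟨n₂, s₂, t₂, h3, h4⟩
    exact ⟨n₁ + n₂, Fin.append s₁ s₂, Fin.append t₁ t₂,
      by rw [repSum_append, ← h1, ← h3]; rfl,
      by rw [repSum_append, ← h2, ← h4]; rfl⟩
  neg_mem' := by
    rintro p ⟨n, s, t, h1, h2⟩
    exact ⟨n, fun i => -(s i), t,
      by rw [repSum_neg, ← h1]; rfl, by rw [repSum_neg, ← h2]; rfl⟩

lemma bimodW_self (x : M) (y : N) : (x, y) ∈ bimodW S x y :=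
  ⟨1, fun _ => 1, fun _ => 1, (repSum_one x).symm, (repSum_one y).symm⟩

lemma bimodW_smul (x : M) (y : N) (a : S) {p : M × N} (hp : p ∈ bimodW S x y) :
    a • p ∈ bimodW S x y := by
  obtain ⟨n, s, t, h1, h2⟩ := hp
  exact ⟨n, fun i => a * s i, t,
    by rw [repSum_smul, ← h1]; rfl, by rw [repSum_smul, ← h2]; rfl⟩

lemma bimodW_opsmul (x : M) (y : N) (a : Sᵐᵒᵖ) {p : M × N} (hp : p ∈ bimodW S x y) :
    a • p ∈ bimodW S x y := by
  obtain ⟨n, s, t, h1, h2⟩ := hp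
  exact ⟨n, s, fun i => t i * a.unop,
    by rw [repSum_opsmul, ← h1]; rfl, by rw [repSum_opsmul, ← h2]; rfl⟩

end Aux2



/-- `M` is a (nonzero) simple `S`-bimodule: it is nonzero and has no nonzero proper
sub-bimodules (additive subgroups closed under both the left and right `S`-actions). -/
def IsSimpleBimodule (S M : Type*) [Ring S] [AddCommGroup M]
    [Module S M] [Module Sᵐᵒᵖ M] : Prop :=
  (∃ m : M, m ≠ 0) ∧
    ∀ P : AddSubgroup M, (∀ s : S, ∀ m ∈ P, s • m ∈ P) →
      (∀ s : Sᵐᵒᵖ, ∀ m ∈ P, s • m ∈ P) → P = ⊥ ∨ P = ⊤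

/-- An `S`-bimodule isomorphism: an additive equivalence commuting with both actions. -/
def IsBimoduleIso (S : Type*) {M N : Type*} [Ring S] [AddCommGroup M] [AddCommGroup N]
    [Module S M] [Module Sᵐᵒᵖ M] [Module S N] [Module Sᵐᵒᵖ N] (f : M ≃+ N) : Prop :=
  (∀ (s : S) (m : M), f (s • m) = s • f m) ∧
    (∀ (s : Sᵐᵒᵖ) (m : M), f (s • m) = s • f m)

/-- Let `S` be a unital ring and `M`, `N` nonzero simple `S`-bimodules
which are not isomorphic. Then for any nonzero `x ∈ M` and nonzero `y ∈ N` there exist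
`n ∈ ℕ` and `s₁,…,sₙ, t₁,…,tₙ ∈ S` with `Σ sᵢ x tᵢ ≠ 0` and `Σ sᵢ y tᵢ = 0`. -/
theorem stmt6 {S M N : Type*} [Ring S] [AddCommGroup M] [AddCommGroup N]
    [Module S M] [Module Sᵐᵒᵖ M] [SMulCommClass S Sᵐᵒᵖ M]
    [Module S N] [Module Sᵐᵒᵖ N] [SMulCommClass S Sᵐᵒᵖ N]
    (hM : IsSimpleBimodule S M) (hN : IsSimpleBimodule S N)
    (hiso : ¬ ∃ f : M ≃+ N, IsBimoduleIso S f)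
    (x : M) (hx : x ≠ 0) (y : N) (hy : y ≠ 0) :
    ∃ (n : ℕ) (s t : Fin n → S),
      (∑ i, s i • (MulOpposite.op (t i)) • x) ≠ 0 ∧
      (∑ i, s i • (MulOpposite.op (t i)) • y) = 0 := by
  by_contra hcon
  push_neg at hcon
  -- key reformulation: pairs in `W` with second coordinate zero have first coordinate zero
  have hkey : ∀ p ∈ bimodW S x y, p.2 = 0 → p.1 = 0 := by
    rintro p ⟨n, s, t, h1, h2⟩ hp2
    rw [h1]
    by_contra h0
    have hy0 : repSum y n s t = 0 := by rw [← h2]; exact hp2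
    exact (hcon n s t h0) hy0
  set W := bimodW S x y with hW
  -- K2 : elements n with (0, n) ∈ W ; it is ⊥
  have hK2 : ∀ n : N, ((0 : M), n) ∈ W → n = 0 := by
    set K2 : AddSubgroup N := W.comap (AddMonoidHom.inr M N) with hK2def
    have hmem : ∀ n : N, n ∈ K2 ↔ ((0 : M), n) ∈ W := fun n => Iff.rfl
    have := hN.2 K2
      (fun a n hn => by
        have : a • ((0 : M), n) ∈ W := bimodW_smul S x y a hn
        simpa [hmem] using this)
      (fun a n hn => by
        have : a • ((0 : M), n) ∈ W := bimodW_opsmul S x y a hn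
        simpa [hmem] using this)
    rcases this with hbot | htop
    · intro n hn
      have : n ∈ K2 := hn
      rw [hbot] at this
      simpa using this
    · -- K2 = ⊤ : then (0, y) ∈ W, so (x, 0) ∈ W, so x = 0, contradiction
      exfalso
      have h0y : ((0 : M), y) ∈ W := by
        have : y ∈ K2 := htop ▸ AddSubgroup.mem_top y
        exact this
      have hx0 : ((x, (0 : N)) : M × N) ∈ W := by
        have := W.sub_mem (bimodW_self S x y) h0y
        simpa using this
      exact hx (hkey _ hx0 rfl)
  -- uniqueness of second coordinates
  have uniqN : ∀ {m : M} {n n' : N}, (m, n) ∈ W → (m, n') ∈ W → n = n' := by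
    intro m n n' h h'
    have : ((0 : M), n - n') ∈ W := by
      have := W.sub_mem h h'
      simpa using this
    have := hK2 _ this
    exact sub_eq_zero.mp this
  -- uniqueness of first coordinates (kernel K1 = ⊥, direct from hkey)
  have uniqM : ∀ {m m' : M} {n : N}, (m, n) ∈ W → (m', n) ∈ W → m = m' := by
    intro m m' n h h'
    have hsub : ((m - m', (0 : N)) : M × N) ∈ W := by
      have := W.sub_mem h h'
      simpa using this
    exact sub_eq_zero.mp (hkey _ hsub rfl)
  -- Im1 = ⊤ : every m has a partner
  have hex : ∀ m : M, ∃ n : N, (m, n) ∈ W := by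
    set Im1 : AddSubgroup M := W.map (AddMonoidHom.fst M N) with hIm1def
    have := hM.2 Im1
      (fun a m hm => by
        obtain ⟨p, hpW, hp1⟩ := hm
        exact ⟨a • p, bimodW_smul S x y a hpW, by simp [← hp1]⟩)
      (fun a m hm => by
        obtain ⟨p, hpW, hp1⟩ := hm
        exact ⟨a • p, bimodW_opsmul S x y a hpW, by simp [← hp1]⟩)
    rcases this with hbot | htop
    · exfalso
      have hxmem : x ∈ Im1 := ⟨(x, y), bimodW_self S x y, rfl⟩
      rw [hbot] at hxmem
      exact hx (by simpa using hxmem)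
    · intro m
      have hm : m ∈ Im1 := htop ▸ AddSubgroup.mem_top m
      obtain ⟨p, hpW, hp1⟩ := hm
      exact ⟨p.2, by rwa [show (m, p.2) = p from Prod.ext hp1.symm rfl]⟩
  -- Im2 = ⊤ : every n has a partner
  have hex2 : ∀ n : N, ∃ m : M, (m, n) ∈ W := by
    set Im2 : AddSubgroup N := W.map (AddMonoidHom.snd M N) with hIm2def
    have := hN.2 Im2
      (fun a n hn => by
        obtain ⟨p, hpW, hp2⟩ := hn
        exact ⟨a • p, bimodW_smul S x y a hpW, by simp [← hp2]⟩)
      (fun a n hn => by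
        obtain ⟨p, hpW, hp2⟩ := hn
        exact ⟨a • p, bimodW_opsmul S x y a hpW, by simp [← hp2]⟩)
    rcases this with hbot | htop
    · exfalso
      have hymem : y ∈ Im2 := ⟨(x, y), bimodW_self S x y, rfl⟩
      rw [hbot] at hymem
      exact hy (by simpa using hymem)
    · intro n
      have hn : n ∈ Im2 := htop ▸ AddSubgroup.mem_top n
      obtain ⟨p, hpW, hp2⟩ := hn
      exact ⟨p.1, by rwa [show (p.1, n) = p from Prod.ext rfl hp2.symm]⟩
  -- the graph function
  choose g hg using hex
  have gadd : ∀ m m' : M, g (m + m') = g m + g m' := by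
    intro m m'
    have h1 : (m + m', g m + g m') ∈ W := by
      have := W.add_mem (hg m) (hg m')
      simpa using this
    exact uniqN (hg (m + m')) h1
  have ginj : Function.Injective g := by
    intro m m' h
    exact uniqM (hg m) (h ▸ hg m')
  have gsurj : Function.Surjective g := by
    intro n
    obtain ⟨m, hm⟩ := hex2 n
    exact ⟨m, uniqN (hg m) hm⟩
  let f0 : M →+ N := AddMonoidHom.mk' g gadd
  let f : M ≃+ N := AddEquiv.ofBijective f0 ⟨ginj, gsurj⟩
  refine hiso ⟨f, ?_, ?_⟩
  · intro a m
    have h1 : (a • m, g (a • m)) ∈ W := hg (a • m)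
    have h2 : (a • m, a • g m) ∈ W := by
      have := bimodW_smul S x y a (hg m)
      simpa using this
    exact uniqN h1 h2
  · intro a m
    have h1 : (a • m, g (a • m)) ∈ W := hg (a • m)
    have h2 : (a • m, a • g m) ∈ W := by
      have := bimodW_opsmul S x y a (hg m)
      simpa using this
    exact uniqN h1 h2
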